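/- Let z₀ < z₁ be real numbers and let ω : ℝ → ℝ be a polynomial function with ω > 0 on (z₀, z₁) and ω(z₀) ≠ 0, ω(z₁) ≠ 0; define f(z) = √((z₁ − z)(z − z₀)) · ω(z) for z ∈ (z₀, z₁). Then the function z ↦ √(1 + f'(z)²) is interval-integrable on [z₀, z₁]; in particular, for every E > 0 the action integral ∫_{z₀}^{z₁} √(2E(1 + f'(z)²)) dz is finite. -/

import Mathlib

open Set MeasureTheory intervalIntegral

lemma sqrt_inv_eq (x : ℝ) : (Real.sqrt x)⁻¹ = x ^ (-(1/2) : ℝ) := by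
  rcases le_or_gt 0 x with h | h
  · rw [Real.rpow_neg h, ← Real.sqrt_eq_rpow]
  · rw [Real.sqrt_eq_zero_of_nonpos h.le, inv_zero,
      Real.rpow_def_of_neg h]
    rw [show (-(1/2) : ℝ) * Real.pi = -(Real.pi/2) by ring, Real.cos_neg, Real.cos_pi_div_two, mul_zero]

lemma sqrt_inv_intble (a b : ℝ) :
    IntervalIntegrable (fun x => (Real.sqrt x)⁻¹) volume a b := by
  simp only [sqrt_inv_eq]
  exact intervalIntegral.intervalIntegrable_rpow' (by norm_num)

lemma qinv_intble (z₀ z₁ : ℝ) (hz : z₀ < z₁) :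
    IntervalIntegrable (fun z => (Real.sqrt ((z₁ - z) * (z - z₀)))⁻¹) volume z₀ z₁ := by
  set m := (z₀ + z₁) / 2 with hm
  have hm0 : z₀ < m := by rw [hm]; linarith
  have hm1 : m < z₁ := by rw [hm]; linarith
  have hmeas : AEStronglyMeasurable (fun z => (Real.sqrt ((z₁ - z) * (z - z₀)))⁻¹)
      (volume : Measure ℝ) := by
    exact ((Real.continuous_sqrt.comp (by continuity)).measurable.inv).aestronglyMeasurable
  apply IntervalIntegrable.trans (b := m)
  · have base : IntervalIntegrable
        (fun x => (Real.sqrt (z₁ - m))⁻¹ * (Real.sqrt (x - z₀))⁻¹) volume z₀ m := by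
      have := ((sqrt_inv_intble 0 (m - z₀)).comp_sub_right z₀).const_mul (Real.sqrt (z₁ - m))⁻¹
      simpa using this
    apply base.mono_fun hmeas.restrict
    rw [uIoc_of_le hm0.le]
    refine (ae_restrict_iff' measurableSet_Ioc).2 (ae_of_all _ fun x hx => ?_)
    have h1 : (0:ℝ) < z₁ - m := by linarith
    have h2 : (0:ℝ) < x - z₀ := by linarith [hx.1]
    have h3 : z₁ - m ≤ z₁ - x := by linarith [hx.2]
    have hs1 : (0:ℝ) < Real.sqrt (z₁ - m) := Real.sqrt_pos.2 h1
    dsimp only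
    rw [Real.norm_eq_abs, Real.norm_eq_abs, Real.sqrt_mul (by linarith [hx.2] : (0:ℝ) ≤ z₁ - x),
      mul_inv, abs_of_nonneg (by positivity), abs_of_nonneg (by positivity)]
    gcongr

  · have base : IntervalIntegrable
        (fun x => (Real.sqrt (m - z₀))⁻¹ * (Real.sqrt (z₁ - x))⁻¹) volume m z₁ := by
      have := (((sqrt_inv_intble 0 (z₁ - m)).comp_sub_left z₁).const_mul (Real.sqrt (m - z₀))⁻¹).symm
      simpa using this
    apply base.mono_fun hmeas.restrict
    rw [uIoc_of_le hm1.le]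
    refine (ae_restrict_iff' measurableSet_Ioc).2 (ae_of_all _ fun x hx => ?_)
    have h1 : (0:ℝ) < m - z₀ := by linarith
    have h2 : (0:ℝ) ≤ z₁ - x := by linarith [hx.2]
    have h3 : m - z₀ ≤ x - z₀ := by linarith [hx.1]
    have hs1 : (0:ℝ) < Real.sqrt (m - z₀) := Real.sqrt_pos.2 h1
    dsimp only
    rw [Real.norm_eq_abs, Real.norm_eq_abs, Real.sqrt_mul h2,
      mul_inv, abs_of_nonneg (by positivity), abs_of_nonneg (by positivity), mul_comm (Real.sqrt (z₁ - x))⁻¹]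
    gcongr


lemma deriv_formula (z₀ z₁ : ℝ) (ω : Polynomial ℝ) (f : ℝ → ℝ)
    (hf : ∀ z ∈ Ioo z₀ z₁, f z = Real.sqrt ((z₁ - z) * (z - z₀)) * ω.eval z)
    (z : ℝ) (hzmem : z ∈ Ioo z₀ z₁) :
    deriv f z = ((z₀ + z₁ - 2 * z) * ω.eval z
        + 2 * ((z₁ - z) * (z - z₀)) * ω.derivative.eval z)
      / (2 * Real.sqrt ((z₁ - z) * (z - z₀))) := by
  have hq : 0 < (z₁ - z) * (z - z₀) :=
    mul_pos (sub_pos.2 hzmem.2) (sub_pos.2 hzmem.1)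
  have heq : f =ᶠ[nhds z] fun y => Real.sqrt ((z₁ - y) * (y - z₀)) * ω.eval y :=
    Filter.eventuallyEq_of_mem (Ioo_mem_nhds hzmem.1 hzmem.2) hf
  rw [heq.deriv_eq]
  have hqd : HasDerivAt (fun y => (z₁ - y) * (y - z₀)) (z₀ + z₁ - 2 * z) z := by
    have h : HasDerivAt (fun y => (z₁ - y) * (y - z₀)) _ z :=
      ((hasDerivAt_id z).const_sub z₁).mul ((hasDerivAt_id z).sub_const z₀)
    convert h using 1; simp only [id_eq]; ring
  have hsd := hqd.sqrt hq.ne'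
  have hfd : HasDerivAt (fun y => Real.sqrt ((z₁ - y) * (y - z₀)) * ω.eval y) _ z :=
    hsd.mul (ω.hasDerivAt z)
  rw [hfd.deriv]
  have hs : 0 < Real.sqrt ((z₁ - z) * (z - z₀)) := Real.sqrt_pos.2 hq
  have hss : Real.sqrt ((z₁ - z) * (z - z₀)) * Real.sqrt ((z₁ - z) * (z - z₀))
      = (z₁ - z) * (z - z₀) := Real.mul_self_sqrt hq.le
  have hne : (2 : ℝ) * Real.sqrt ((z₁ - z) * (z - z₀)) ≠ 0 := by positivity
  rw [div_mul_eq_mul_div, div_add' _ _ _ hne]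
  congr 1
  linear_combination (2 * Polynomial.eval z (Polynomial.derivative ω)) * hss


/-- For the profile `f(z) = √((z₁-z)(z-z₀))·ω(z)` with `ω` polynomial,
positive on `(z₀, z₁)` and nonvanishing at the endpoints, the function
`√(1 + f'²)` is interval-integrable on `[z₀, z₁]`; in particular the action
integral `∫ √(2E(1 + f'²))` is finite for every `E > 0`. -/
theorem stmt6 (z₀ z₁ : ℝ) (hz : z₀ < z₁) (ω : Polynomial ℝ)
    (hωpos : ∀ z ∈ Ioo z₀ z₁, 0 < ω.eval z)
    (hω₀ : ω.eval z₀ ≠ 0) (hω₁ : ω.eval z₁ ≠ 0)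
    (f : ℝ → ℝ)
    (hf : ∀ z ∈ Ioo z₀ z₁, f z = Real.sqrt ((z₁ - z) * (z - z₀)) * ω.eval z) :
    IntervalIntegrable (fun z => Real.sqrt (1 + deriv f z ^ 2)) volume z₀ z₁ ∧
    ∀ E : ℝ, 0 < E →
      IntervalIntegrable (fun z => Real.sqrt (2 * E * (1 + deriv f z ^ 2)))
        volume z₀ z₁ := by
  have hNcont : Continuous (fun z : ℝ => (z₀ + z₁ - 2 * z) * ω.eval z
      + 2 * ((z₁ - z) * (z - z₀)) * ω.derivative.eval z) :=
    ((continuous_const.sub (continuous_const.mul continuous_id)).mul ω.continuous).add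
      ((continuous_const.mul ((continuous_const.sub continuous_id).mul
        (continuous_id.sub continuous_const))).mul ω.derivative.continuous)
  have hGcont : Continuous (fun z : ℝ => Real.sqrt (4 * ((z₁ - z) * (z - z₀))
      + ((z₀ + z₁ - 2 * z) * ω.eval z
        + 2 * ((z₁ - z) * (z - z₀)) * ω.derivative.eval z) ^ 2)) :=
    Real.continuous_sqrt.comp ((continuous_const.mul ((continuous_const.sub
      continuous_id).mul (continuous_id.sub continuous_const))).add (hNcont.pow 2))
  obtain ⟨C, hC⟩ :=
    (isCompact_Icc : IsCompact (Icc z₀ z₁)).exists_bound_of_continuousOn hGcont.continuousOn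
  have hbound : ∀ z ∈ Ioo z₀ z₁, Real.sqrt (1 + deriv f z ^ 2)
      ≤ C / 2 * (Real.sqrt ((z₁ - z) * (z - z₀)))⁻¹ := by
    intro z hzmem
    have hq : 0 < (z₁ - z) * (z - z₀) :=
      mul_pos (sub_pos.2 hzmem.2) (sub_pos.2 hzmem.1)
    have hs : 0 < Real.sqrt ((z₁ - z) * (z - z₀)) := Real.sqrt_pos.2 hq
    set Nz := (z₀ + z₁ - 2 * z) * ω.eval z
        + 2 * ((z₁ - z) * (z - z₀)) * ω.derivative.eval z with hNz
    have h1 : 1 + deriv f z ^ 2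
        = (4 * ((z₁ - z) * (z - z₀)) + Nz ^ 2) / (4 * ((z₁ - z) * (z - z₀))) := by
      rw [deriv_formula z₀ z₁ ω f hf z hzmem, div_pow, mul_pow,
        Real.sq_sqrt hq.le]
      rw [show (2:ℝ)^2 * ((z₁ - z) * (z - z₀)) = 4 * ((z₁ - z) * (z - z₀)) by ring]
      field_simp
      rw [hNz, add_div, mul_div_cancel_left₀ _ hq.ne']; ring
    rw [h1, Real.sqrt_div (by positivity) _,
      show 4 * ((z₁ - z) * (z - z₀)) = 2 ^ 2 * ((z₁ - z) * (z - z₀)) by ring,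
      Real.sqrt_mul (by positivity) _, Real.sqrt_sq (by norm_num : (0:ℝ) ≤ 2),
      show C / 2 * (Real.sqrt ((z₁ - z) * (z - z₀)))⁻¹
        = C / (2 * Real.sqrt ((z₁ - z) * (z - z₀))) by
          rw [div_eq_mul_inv, div_eq_mul_inv, mul_inv]; ring]
    gcongr
    have h4 := hC z (Ioo_subset_Icc_self hzmem)
    rw [Real.norm_eq_abs, abs_of_nonneg (Real.sqrt_nonneg _)] at h4
    rw [show ((2:ℝ)^2 : ℝ) = 4 by norm_num]
    exact h4
  have hmeasfun : AEStronglyMeasurable (fun z => Real.sqrt (1 + deriv f z ^ 2))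
      (volume : Measure ℝ) :=
    (Real.continuous_sqrt.measurable.comp
      (measurable_const.add ((measurable_deriv f).pow_const 2))).aestronglyMeasurable
  have hne : ∀ᵐ z : ℝ ∂(volume : Measure ℝ), z ≠ z₁ := by
    rw [Filter.eventually_iff, mem_ae_iff]
    simp only [ne_eq, compl_setOf, not_not]
    rw [show {z : ℝ | z = z₁} = {z₁} from rfl]
    exact measure_singleton z₁
  have first : IntervalIntegrable (fun z => Real.sqrt (1 + deriv f z ^ 2)) volume z₀ z₁ := by
    apply ((qinv_intble z₀ z₁ hz).const_mul (C / 2)).mono_fun hmeasfun.restrict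
    rw [uIoc_of_le hz.le]
    refine (MeasureTheory.ae_restrict_iff' measurableSet_Ioc).mpr ?_
    filter_upwards [hne] with z hzne hzmem
    have hzIoo : z ∈ Ioo z₀ z₁ := ⟨hzmem.1, lt_of_le_of_ne hzmem.2 hzne⟩
    rw [Real.norm_eq_abs, abs_of_nonneg (Real.sqrt_nonneg _), Real.norm_eq_abs]
    exact le_trans (hbound z hzIoo) (le_abs_self _)
  refine ⟨first, fun E hE => ?_⟩
  have heq : (fun z => Real.sqrt (2 * E * (1 + deriv f z ^ 2)))
      = fun z => Real.sqrt (2 * E) * Real.sqrt (1 + deriv f z ^ 2) :=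
    funext fun z => by rw [Real.sqrt_mul (by positivity)]
  rw [heq]
  exact first.const_mul _
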